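/- Let Z be a measurable space, μ a probability measure on Z, Ψ : Z → [0,∞) measurable with ∫ Ψ dμ = 1, and ν := μ.withDensity Ψ. Then the pushforward measures satisfy ν.map Ψ = μ.map Ψ if and only if Ψ = 1 μ-almost everywhere, if and only if ν = μ. -/

import Mathlib

open MeasureTheory

lemma stmt_3_key {Z : Type*} [MeasurableSpace Z] (μ : Measure Z) [IsProbabilityMeasure μ]
    (Ψ : Z → ℝ) (hΨmeas : Measurable Ψ) (hΨnonneg : ∀ z, 0 ≤ Ψ z)
    (hΨint : ∫ z, Ψ z ∂μ = 1)
    (ν : Measure Z) (hν : ν = μ.withDensity (fun z => ENNReal.ofReal (Ψ z)))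
    (hmap : ν.map Ψ = μ.map Ψ) : ∀ᵐ z ∂μ, Ψ z = 1 := by
  have hint : Integrable Ψ μ := by
    by_contra h
    rw [integral_undef h] at hΨint
    exact one_ne_zero hΨint.symm
  have hofm : Measurable fun z => ENNReal.ofReal (Ψ z) := hΨmeas.ennreal_ofReal
  have hl : ∫⁻ z, ENNReal.ofReal (Ψ z) ∂μ = 1 := by
    rw [← ofReal_integral_eq_lintegral_ofReal hint (Filter.Eventually.of_forall hΨnonneg),
      hΨint, ENNReal.ofReal_one]
  set S : Set Z := Ψ ⁻¹' (Set.Iio 1) with hSdef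
  have hS : MeasurableSet S := hΨmeas measurableSet_Iio
  have hνS : ν S = μ S := by
    have h1 := congrArg (fun m => m (Set.Iio (1:ℝ))) hmap
    simpa [Measure.map_apply hΨmeas measurableSet_Iio] using h1
  have hνS' : ν S = ∫⁻ z in S, ENNReal.ofReal (Ψ z) ∂μ := by
    rw [hν, withDensity_apply _ hS]
  have hfin : ∫⁻ z in S, ENNReal.ofReal (Ψ z) ∂μ ≠ ⊤ := by
    rw [← hνS', hνS]
    exact (measure_lt_top μ S).ne
  have hle : (fun z => ENNReal.ofReal (Ψ z)) ≤ᵐ[μ.restrict S] fun _ => (1 : ENNReal) := by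
    filter_upwards [ae_restrict_mem hS] with z hz
    have : Ψ z < 1 := hz
    simpa using ENNReal.ofReal_le_one.2 this.le
  have hsub : ∫⁻ z in S, ((1 : ENNReal) - ENNReal.ofReal (Ψ z)) ∂μ = 0 := by
    rw [lintegral_sub hofm hfin hle]
    simp only [lintegral_one, Measure.restrict_apply_univ]
    rw [← hνS', hνS, tsub_self]
  have hae0 : ∀ᵐ z ∂μ.restrict S, (1 : ENNReal) - ENNReal.ofReal (Ψ z) = 0 := by
    have := (lintegral_eq_zero_iff (measurable_const.sub hofm)).1 hsub
    filter_upwards [this] with z hz using hz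
  have hS0 : μ S = 0 := by
    have hfalse : ∀ᵐ z ∂μ.restrict S, False := by
      filter_upwards [hae0, ae_restrict_mem hS] with z h0 hz
      have hlt : ENNReal.ofReal (Ψ z) < 1 := ENNReal.ofReal_lt_one.2 hz
      exact absurd (tsub_eq_zero_iff_le.mp h0) (not_le.2 hlt)
    have hbot : ae (μ.restrict S) = ⊥ := Filter.eventually_false_iff_eq_bot.mp hfalse
    have : μ.restrict S = 0 := ae_eq_bot.mp hbot
    simpa [Measure.restrict_eq_zero] using this
  -- hence 1 ≤ Ψ a.e.
  have hge : ∀ᵐ z ∂μ, 1 ≤ Ψ z := by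
    have : ∀ᵐ z ∂μ, z ∉ S := (ae_iff).mpr (by simpa [hSdef] using (show μ {a | Ψ a < 1} = 0 from hS0))
    filter_upwards [this] with z hz
    simpa [hSdef, not_lt] using hz
  have hge' : (fun _ => (1 : ENNReal)) ≤ᵐ[μ] fun z => ENNReal.ofReal (Ψ z) := by
    filter_upwards [hge] with z hz
    simpa using ENNReal.one_le_ofReal.2 hz
  have hsub2 : ∫⁻ z, (ENNReal.ofReal (Ψ z) - 1) ∂μ = 0 := by
    rw [lintegral_sub measurable_const (by simp) hge']
    rw [hl]
    simp
  have hae2 : ∀ᵐ z ∂μ, ENNReal.ofReal (Ψ z) - 1 = 0 := by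
    have := (lintegral_eq_zero_iff (hofm.sub measurable_const)).1 hsub2
    filter_upwards [this] with z hz using hz
  filter_upwards [hae2, hge] with z h2 hz
  have hle1 : ENNReal.ofReal (Ψ z) ≤ 1 := tsub_eq_zero_iff_le.mp h2
  have : Ψ z ≤ 1 := by
    have := (ENNReal.ofReal_le_one).1 hle1
    exact this
  exact le_antisymm this hz

theorem stmt_3 {Z : Type*} [MeasurableSpace Z] (μ : Measure Z) [IsProbabilityMeasure μ]
    (Ψ : Z → ℝ) (hΨmeas : Measurable Ψ) (hΨnonneg : ∀ z, 0 ≤ Ψ z)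
    (hΨint : ∫ z, Ψ z ∂μ = 1)
    (ν : Measure Z) (hν : ν = μ.withDensity (fun z => ENNReal.ofReal (Ψ z))) :
    (ν.map Ψ = μ.map Ψ ↔ (∀ᵐ z ∂μ, Ψ z = 1)) ∧
    ((∀ᵐ z ∂μ, Ψ z = 1) ↔ ν = μ) := by
  have heasy : (∀ᵐ z ∂μ, Ψ z = 1) → ν = μ := by
    intro h
    rw [hν]
    have : (fun z => ENNReal.ofReal (Ψ z)) =ᵐ[μ] fun _ => (1 : ENNReal) := by
      filter_upwards [h] with z hz
      simp [hz]
    rw [withDensity_congr_ae this]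
    simp [withDensity_one]
  refine ⟨⟨fun hmap => stmt_3_key μ Ψ hΨmeas hΨnonneg hΨint ν hν hmap,
    fun h => by rw [heasy h]⟩,
    ⟨heasy, fun hνμ => stmt_3_key μ Ψ hΨmeas hΨnonneg hΨint ν hν (by rw [hνμ])⟩⟩
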